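/- A vector w ∈ ℝ^N is an interim payoff profile of some information structure (i.e., there exists Π with w_i = ∑_s π(s|θ_i) w(μ_s, θ_i) for all i) if and only if the pair (μ₀, w) lies in the convex hull of the graph of the adjusted payoff function ŵ : Δ(Θ) → ℝ^N defined by ŵ_i(μ) = (μ(θ_i)/μ₀(θ_i)) · w(μ, θ_i). -/

import Mathlib

set_option maxHeartbeats 1000000

open Set Filter Topology

lemma aux_le_zero {E : Type*} [NormedAddCommGroup E] [NormedSpace ℝ E]
    {s : Set E} (hs : Convex ℝ s) {f : E →L[ℝ] ℝ} {b : E} (hb : b ∈ interior s)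
    (hneg : ∀ y ∈ interior s, f y < 0) {a : E} (ha : a ∈ s) : f a ≤ 0 := by
  have key : ∀ t : ℝ, t ∈ Set.Ioo (0:ℝ) 1 → t * f b + (1 - t) * f a < 0 := by
    intro t ht
    have hmem : t • b + (1 - t) • a ∈ interior s :=
      Convex.combo_interior_closure_mem_interior hs hb (subset_closure ha) ht.1
        (by linarith [ht.2]) (by ring)
    have := hneg _ hmem
    simpa [map_add, map_smul, smul_eq_mul] using this
  have htend : Tendsto (fun t : ℝ => t * f b + (1 - t) * f a) (𝓝[>] (0:ℝ)) (𝓝 (f a)) := by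
    have : Tendsto (fun t : ℝ => t * f b + (1 - t) * f a) (𝓝 (0:ℝ))
        (𝓝 (0 * f b + (1 - 0) * f a)) :=
      (((continuous_id.mul continuous_const).add
        ((continuous_const.sub continuous_id).mul continuous_const)).tendsto 0)
    simpa using this.mono_left nhdsWithin_le_nhds
  refine le_of_tendsto htend ?_
  filter_upwards [Ioo_mem_nhdsGT_of_mem (by norm_num : (0:ℝ) ∈ Set.Ico (0:ℝ) 1)] with t ht
  exact (key t ht).le

/-- σ-convexity of convex hulls in finite dimension. -/
lemma sigma_convexHull {E : Type*} [NormedAddCommGroup E] [NormedSpace ℝ E]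
    [FiniteDimensional ℝ E] {ι : Type*} {A : Set E} {p : ι → E} {l : ι → ℝ} {x : E}
    (hp : ∀ n, p n ∈ A) (hl0 : ∀ n, 0 ≤ l n) (hl1 : HasSum l 1)
    (hx : HasSum (fun n => l n • p n) x) : x ∈ convexHull ℝ A := by
  classical
  set q : ι → E := fun n => p n - x with hqdef
  have hq : HasSum (fun n => l n • q n) 0 := by
    have h1 : HasSum (fun n => l n • x) x := by simpa using hl1.smul_const x
    have := hx.sub h1
    simpa [hqdef, smul_sub] using this
  set supp : Set ι := Function.support l with hsuppdef
  set V : Submodule ℝ E := Submodule.span ℝ (q '' supp) with hVdef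
  set l' : supp → ℝ := fun n => l ↑n with hl'def
  have hq'mem : ∀ n : supp, q ↑n ∈ V := fun n => Submodule.subset_span ⟨↑n, n.2, rfl⟩
  set q' : supp → V := fun n => ⟨q ↑n, hq'mem n⟩ with hq'def
  have hl1' : HasSum l' 1 := (hasSum_subtype_iff_of_support_subset (Set.Subset.refl _)).2 hl1
  have hl0' : ∀ n, 0 ≤ l' n := fun n => hl0 _
  have hlne' : ∀ n : supp, l' n ≠ 0 := fun n => n.2
  have hqsub : HasSum (fun n : supp => l ↑n • q ↑n) (0 : E) := by
    refine (hasSum_subtype_iff_of_support_subset ?_).2 hq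
    intro n hn
    simp only [Function.mem_support] at hn ⊢
    intro h
    exact hn (by simp [h])
  have hind : Topology.IsInducing ((↑) : V → E) := Topology.IsInducing.subtypeVal
  have hq0' : HasSum (fun n : supp => l' n • q' n) (0 : V) := by
    have := (hind.hasSum_iff (L := SummationFilter.unconditional supp) (g := V.subtype) (fun n : supp => l' n • q' n) 0)
    refine this.1 ?_
    exact hqsub
  -- supp nonempty
  have hne : Nonempty supp := by
    by_contra h
    have : l = 0 := by
      funext n
      by_contra hln
      exact h ⟨⟨n, hln⟩⟩
    rw [this] at hl1
    have h10 : (1:ℝ) = 0 := hl1.unique hasSum_zero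
    norm_num at h10
  -- the span of q' is everything
  have hspan : Submodule.span ℝ (Set.range q') = (⊤ : Submodule ℝ V) := by
    apply Submodule.map_injective_of_injective V.injective_subtype
    rw [Submodule.map_span, Submodule.map_top, Submodule.range_subtype]
    congr 1
    ext y
    constructor
    · rintro ⟨_, ⟨n, rfl⟩, rfl⟩
      exact ⟨↑n, n.2, rfl⟩
    · rintro ⟨n, hn, rfl⟩
      exact ⟨q' ⟨n, hn⟩, ⟨⟨n, hn⟩, rfl⟩, rfl⟩
  set C : Set V := convexHull ℝ (Set.range q') with hCdef
  -- suffices to show 0 ∈ C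
  suffices h0 : (0 : V) ∈ C by
    have himg : (fun v : V => (v : E) + x) '' C ⊆ convexHull ℝ A := by
      have : (fun v : V => (v : E) + x) '' C =
          convexHull ℝ ((fun v : V => (v : E) + x) '' (Set.range q')) := by
        have e : (fun v : V => (v : E) + x) =
            ⇑((AffineMap.id ℝ E).comp (V.subtype.toAffineMap) + AffineMap.const ℝ V x) := by
          funext v; simp
        rw [hCdef, e, AffineMap.image_convexHull]
      rw [this]
      apply convexHull_mono
      rintro _ ⟨_, ⟨n, rfl⟩, rfl⟩
      show (q' n : E) + x ∈ A
      have : (q' n : E) + x = p ↑n := by simp [hq'def, hqdef]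
      rw [this]
      exact hp _
    have : x ∈ (fun v : V => (v : E) + x) '' C := ⟨0, h0, by simp⟩
    exact himg this
  -- 0 ∈ closure C
  have h0cl : (0 : V) ∈ closure C := by
    have hm : Tendsto (fun F : Finset supp => ∑ n ∈ F, l' n) atTop (𝓝 1) := hl1'
    have hS : Tendsto (fun F : Finset supp => ∑ n ∈ F, l' n • q' n) atTop (𝓝 0) := hq0'
    have hc : Tendsto (fun F : Finset supp => (∑ n ∈ F, l' n)⁻¹ • ∑ n ∈ F, l' n • q' n)
        atTop (𝓝 0) := by
      have := (hm.inv₀ one_ne_zero).smul hS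
      simpa using this
    refine mem_closure_of_tendsto hc ?_
    filter_upwards [hm.eventually (lt_mem_nhds (by norm_num : (0:ℝ) < 1))] with F hF
    have hFpos : 0 < ∑ n ∈ F, l' n := hF
    rw [Finset.smul_sum]
    simp_rw [smul_smul]
    refine (convex_convexHull ℝ _).sum_mem (fun n _ => mul_nonneg (inv_nonneg.2 hFpos.le) (hl0' n))
      ?_ (fun n _ => subset_convexHull ℝ _ ⟨n, rfl⟩)
    rw [← Finset.mul_sum]
    exact inv_mul_cancel₀ hFpos.ne'
  -- affine span of the points is everything
  have h0aff : (0 : V) ∈ affineSpan ℝ (Set.range q') := by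
    have hcl : IsClosed ((affineSpan ℝ (Set.range q') : AffineSubspace ℝ V) : Set V) :=
      AffineSubspace.closed_of_finiteDimensional _
    have hsub : C ⊆ (affineSpan ℝ (Set.range q') : Set V) := by
      rw [← affineSpan_convexHull (Set.range q')]
      exact subset_affineSpan ℝ _
    have : closure C ⊆ (affineSpan ℝ (Set.range q') : Set V) := by
      rw [← hcl.closure_eq]; exact closure_mono hsub
    exact this h0cl
  have haff : affineSpan ℝ (Set.range q') = ⊤ := by
    have hdirtop : (affineSpan ℝ (Set.range q')).direction = ⊤ := by
      rw [eq_top_iff, ← hspan]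
      refine Submodule.span_le.2 ?_
      rintro _ ⟨n, rfl⟩
      have h1 : q' n ∈ affineSpan ℝ (Set.range q') := subset_affineSpan ℝ _ ⟨n, rfl⟩
      have := AffineSubspace.vsub_mem_direction h1 h0aff
      simpa using this
    rw [eq_top_iff]
    intro v _
    have hv : v ∈ (affineSpan ℝ (Set.range q')).direction := hdirtop ▸ Submodule.mem_top
    have := AffineSubspace.vadd_mem_of_mem_direction hv h0aff
    simpa using this
  have hC : Convex ℝ C := convex_convexHull ℝ _
  have hint : (interior C).Nonempty := by
    rw [hC.interior_nonempty_iff_affineSpan_eq_top, hCdef, affineSpan_convexHull]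
    exact haff
  by_contra h0
  have h0int : (0 : V) ∉ interior C := fun h => h0 (interior_subset h)
  obtain ⟨f, hf⟩ := geometric_hahn_banach_open_point hC.interior isOpen_interior h0int
  have hfneg : ∀ y ∈ interior C, f y < 0 := by
    intro y hy
    simpa using hf y hy
  obtain ⟨b, hb⟩ := hint
  have hfC : ∀ a ∈ C, f a ≤ 0 := fun a ha => aux_le_zero hC hb hfneg ha
  have hterm : ∀ n : supp, f (q' n) = 0 := by
    have hsum0 : HasSum (fun n : supp => f (l' n • q' n)) (f 0) := f.hasSum hq0'
    have h' : HasSum (fun n : supp => -(l' n * f (q' n))) 0 := by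
      have := hsum0.neg
      simpa [map_smul, smul_eq_mul] using this
    have hnonneg : ∀ n : supp, 0 ≤ -(l' n * f (q' n)) := by
      intro n
      have h1 : f (q' n) ≤ 0 := hfC _ (subset_convexHull ℝ _ ⟨n, rfl⟩)
      nlinarith [hl0' n]
    have hzero := (hasSum_zero_iff_of_nonneg hnonneg).1 h'
    intro n
    have h2 : -(l' n * f (q' n)) = 0 := congrFun hzero n
    have h3 : l' n * f (q' n) = 0 := by linarith
    rcases mul_eq_zero.1 h3 with h | h
    · exact absurd h (hlne' n)
    · exact h
  have hker : (⊤ : Submodule ℝ V) ≤ LinearMap.ker (f : V →ₗ[ℝ] ℝ) := by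
    rw [← hspan]
    refine Submodule.span_le.2 ?_
    rintro _ ⟨n, rfl⟩
    simpa [LinearMap.mem_ker] using hterm n
  have hf0 : f b = 0 := hker (Submodule.mem_top) 
  exact absurd (hfneg b hb) (by simp [hf0])

/-- A vector `v ∈ ℝ^N` is the interim payoff profile of some information structure
iff `(μ₀, v)` lies in the convex hull of the graph of the adjusted payoff function
`ŵ(μ) i = (μ i / μ₀ i) * w μ i`. -/
theorem stmt2 {N : ℕ} (hN : 0 < N) (μ₀ : Fin N → ℝ)
    (h₀pos : ∀ i, 0 < μ₀ i) (h₀sum : ∑ i, μ₀ i = 1)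
    (w : (Fin N → ℝ) → Fin N → ℝ) (B : ℝ)
    (hw : ∀ μ : Fin N → ℝ, (∀ i, 0 ≤ μ i) → (∑ i, μ i = 1) → ∀ i, |w μ i| ≤ B)
    (v : Fin N → ℝ) :
    (∃ (S : Type) (_ : Countable S) (π : Fin N → S → ℝ),
        (∀ i s, 0 ≤ π i s) ∧ (∀ i, HasSum (π i) 1) ∧
        ∀ i, v i = ∑' s, π i s *
          w (fun j => μ₀ j * π j s / ∑ k, μ₀ k * π k s) i)
      ↔ (μ₀, v) ∈ convexHull ℝ
          {p : (Fin N → ℝ) × (Fin N → ℝ) |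
            ∃ μ : Fin N → ℝ, (∀ i, 0 ≤ μ i) ∧ (∑ i, μ i = 1) ∧
              p = (μ, fun i => μ i / μ₀ i * w μ i)} := by
  classical
  have hμ0ne : ∀ i, μ₀ i ≠ 0 := fun i => (h₀pos i).ne'
  constructor
  · rintro ⟨S, hc, π, hπ0, hπ1, hv⟩
    set lam : S → ℝ := fun s => ∑ k, μ₀ k * π k s with hlamdef
    set post : S → Fin N → ℝ := fun s j => μ₀ j * π j s / ∑ k, μ₀ k * π k s with hpostdef
    have hlam0 : ∀ s, 0 ≤ lam s := fun s =>
      Finset.sum_nonneg fun k _ => mul_nonneg (h₀pos k).le (hπ0 k s)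
    have hlamz : ∀ s, lam s = 0 → ∀ k, π k s = 0 := by
      intro s hs k
      have h := (Finset.sum_eq_zero_iff_of_nonneg
        (fun k _ => mul_nonneg (h₀pos k).le (hπ0 k s))).1 hs k (Finset.mem_univ k)
      exact (mul_eq_zero.1 h).resolve_left (hμ0ne k)
    have hlam1 : HasSum lam 1 := by
      have h := hasSum_sum (s := (Finset.univ : Finset (Fin N)))
        (f := fun k s => μ₀ k * π k s) (a := fun k => μ₀ k)
        (fun k _ => by simpa using (hπ1 k).mul_left (μ₀ k))
      simpa [h₀sum] using h
    set p : S → (Fin N → ℝ) × (Fin N → ℝ) := fun s =>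
      if lam s = 0 then (μ₀, fun i => μ₀ i / μ₀ i * w μ₀ i)
      else (post s, fun i => post s i / μ₀ i * w (post s) i) with hpdef
    have hpost : ∀ s, lam s ≠ 0 → (∀ j, 0 ≤ post s j) ∧ ∑ j, post s j = 1 := by
      intro s hs
      constructor
      · intro j
        exact div_nonneg (mul_nonneg (h₀pos j).le (hπ0 j s)) (hlam0 s)
      · rw [hpostdef]
        simp only
        rw [← Finset.sum_div]
        exact div_self hs
    have hp : ∀ s, p s ∈ {p : (Fin N → ℝ) × (Fin N → ℝ) |
        ∃ μ : Fin N → ℝ, (∀ i, 0 ≤ μ i) ∧ (∑ i, μ i = 1) ∧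
          p = (μ, fun i => μ i / μ₀ i * w μ i)} := by
      intro s
      by_cases h : lam s = 0
      · exact ⟨μ₀, fun i => (h₀pos i).le, h₀sum, by rw [hpdef]; simp only [if_pos h]⟩
      · exact ⟨post s, (hpost s h).1, (hpost s h).2, by rw [hpdef]; simp only [if_neg h]⟩
    have hfst : HasSum (fun s => lam s • (p s).1) μ₀ := by
      have e1 : (fun s => lam s • (p s).1) = fun s => (fun j => μ₀ j * π j s) := by
        funext s
        by_cases h : lam s = 0
        · funext j
          simp [hpdef, if_pos h, h, hlamz s h j]
        · funext j
          simp only [hpdef, if_neg h, Pi.smul_apply, smul_eq_mul]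
          rw [mul_comm]
          exact div_mul_cancel₀ _ h
      rw [e1]
      exact Pi.hasSum.2 fun j => by simpa using (hπ1 j).mul_left (μ₀ j)
    have hvsum : ∀ i, Summable (fun s => π i s * w (post s) i) := by
      intro i
      refine Summable.of_abs (Summable.of_nonneg_of_le (fun s => abs_nonneg _)
        (fun s => ?_) ((hπ1 i).summable.mul_right (max B 0)))
      by_cases h : lam s = 0
      · rw [hlamz s h i]
        simp
      · rw [abs_mul, abs_of_nonneg (hπ0 i s)]
        refine mul_le_mul_of_nonneg_left ?_ (hπ0 i s)
        exact le_trans (hw (post s) (hpost s h).1 (hpost s h).2 i) (le_max_left _ _)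
    have hsnd : HasSum (fun s => lam s • (p s).2) v := by
      have e2 : (fun s => lam s • (p s).2) = fun s => (fun i => π i s * w (post s) i) := by
        funext s
        by_cases h : lam s = 0
        · funext i
          simp [hpdef, if_pos h, h, hlamz s h i]
        · funext i
          simp only [hpdef, if_neg h, Pi.smul_apply, smul_eq_mul]
          have hkey : lam s * (post s i / μ₀ i) = π i s := by
            have hpi : post s i = μ₀ i * π i s / lam s := rfl
            rw [hpi, div_div, mul_comm (lam s) (μ₀ i), ← div_div,
              mul_div_cancel_left₀ _ (hμ0ne i), mul_comm, div_mul_cancel₀ _ h]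
          calc lam s * (post s i / μ₀ i * w (post s) i)
              = lam s * (post s i / μ₀ i) * w (post s) i := by ring
            _ = π i s * w (post s) i := by rw [hkey]
      rw [e2]
      refine Pi.hasSum.2 fun i => ?_
      have h1 : HasSum (fun s => π i s * w (post s) i)
          (∑' s, π i s * w (post s) i) := (hvsum i).hasSum
      have h2 : v i = ∑' s, π i s * w (post s) i := hv i
      rw [h2]
      exact h1
    have hx : HasSum (fun s => lam s • p s) (μ₀, v) := hfst.prodMk hsnd
    exact sigma_convexHull hp hlam0 hlam1 hx
  · intro hmem
    rw [convexHull_eq] at hmem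
    obtain ⟨ι, t, wt, z, hw0, hw1, hzA, hcm⟩ := hmem
    rw [Finset.centerMass_eq_of_sum_1 _ _ hw1] at hcm
    have hsum_attach : ∑ s : {i // i ∈ t}, wt ↑s • z ↑s = (μ₀, v) := by
      rw [Finset.univ_eq_attach, Finset.sum_attach t (fun i => wt i • z i)]
      exact hcm
    set μs : {i // i ∈ t} → Fin N → ℝ := fun s => (hzA ↑s s.2).choose with hμsdef
    have hμprop : ∀ s : {i // i ∈ t}, (∀ i, 0 ≤ μs s i) ∧ (∑ i, μs s i = 1) ∧
        z ↑s = (μs s, fun i => μs s i / μ₀ i * w (μs s) i) :=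
      fun s => (hzA ↑s s.2).choose_spec
    set π : Fin N → {i // i ∈ t} → ℝ := fun i s => wt ↑s * μs s i / μ₀ i with hπdef
    have hπ0 : ∀ i s, 0 ≤ π i s := fun i s =>
      div_nonneg (mul_nonneg (hw0 _ s.2) ((hμprop s).1 i)) (h₀pos i).le
    have hfst : ∀ i, ∑ s : {i // i ∈ t}, wt ↑s * μs s i = μ₀ i := by
      intro i
      have h1 := congrArg Prod.fst hsum_attach
      simp only [Prod.fst_sum, Prod.smul_fst] at h1
      have h2 : ∀ s : {i // i ∈ t}, (z ↑s).1 = μs s := fun s => by rw [(hμprop s).2.2]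
      have h3 := congrFun h1 i
      rw [Finset.sum_apply] at h3
      simp only [Pi.smul_apply, smul_eq_mul] at h3
      rw [← h3]
      exact Finset.sum_congr rfl fun s _ => by rw [h2 s]
    have hsnd : ∀ i, ∑ s : {i // i ∈ t}, wt ↑s * (μs s i / μ₀ i * w (μs s) i) = v i := by
      intro i
      have h1 := congrArg Prod.snd hsum_attach
      simp only [Prod.snd_sum, Prod.smul_snd] at h1
      have h3 := congrFun h1 i
      rw [Finset.sum_apply] at h3
      simp only [Pi.smul_apply, smul_eq_mul] at h3
      rw [← h3]
      refine Finset.sum_congr rfl fun s _ => ?_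
      rw [(hμprop s).2.2]
    refine ⟨{i // i ∈ t}, inferInstance, π, hπ0, ?_, ?_⟩
    · intro i
      have hsum : ∑ s : {i // i ∈ t}, π i s = 1 := by
        rw [hπdef]
        simp only
        rw [← Finset.sum_div, hfst i]
        exact div_self (hμ0ne i)
      have := hasSum_fintype (π i)
      rwa [hsum] at this
    · intro i
      rw [tsum_fintype, ← hsnd i]
      refine Finset.sum_congr rfl fun s _ => ?_
      by_cases hws : wt ↑s = 0
      · simp [hπdef, hws]
      · have hpost_eq : (fun j => μ₀ j * π j s / ∑ k, μ₀ k * π k s) = μs s := by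
          funext j
          have hnum : ∀ k, μ₀ k * π k s = wt ↑s * μs s k := by
            intro k
            rw [hπdef]
            simp only
            rw [mul_comm]
            exact div_mul_cancel₀ _ (hμ0ne k)
          have hden : ∑ k, μ₀ k * π k s = wt ↑s := by
            simp_rw [hnum]
            rw [← Finset.mul_sum, (hμprop s).2.1, mul_one]
          rw [hnum j, hden]
          rw [mul_comm]
          exact mul_div_cancel_right₀ _ hws
        rw [hpost_eq]
        rw [hπdef]
        simp only
        ring
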